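/- (Tail-summability is equivalent to R-linear convergence.) Let (a_n)_{n≥0} be a sequence of nonnegative real numbers. Then the following are equivalent: (i) there exists C₁ > 0 such that Σ_{n' > n} a_{n'} ≤ C₁ a_n for all n; (ii) there exist C₂ > 0 and 0 < q < 1 such that a_n ≤ C₂ q^{n-m} a_m for all m ≤ n. -/

import Mathlib

/-- Tail-summability is equivalent to R-linear convergence. -/
theorem tail_summability_iff_Rlinear (a : ℕ → ℝ) (ha : ∀ n, 0 ≤ a n) :
    ((Summable a) ∧ ∃ C₁ > 0, ∀ n, (∑' k : ℕ, a (n + 1 + k)) ≤ C₁ * a n) ↔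
    (∃ C₂ > 0, ∃ q : ℝ, 0 < q ∧ q < 1 ∧
      ∀ m n : ℕ, m ≤ n → a n ≤ C₂ * q ^ (n - m) * a m) := by
  constructor
  · rintro ⟨hsum, C₁, hC₁, hC⟩
    set S : ℕ → ℝ := fun n => ∑' k : ℕ, a (n + 1 + k) with hS
    have hsumtail : ∀ n : ℕ, Summable (fun k => a (n + 1 + k)) := by
      intro n
      have := (summable_nat_add_iff (n + 1)).2 hsum
      simpa [add_comm] using this
    have hSnonneg : ∀ n, 0 ≤ S n := fun n => tsum_nonneg (fun k => ha _)
    have hrec : ∀ n, S n = a (n + 1) + S (n + 1) := by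
      intro n
      have := Summable.tsum_eq_zero_add (hsumtail n)
      simpa [S, add_assoc, add_comm, add_left_comm] using this
    obtain ⟨q, hq⟩ : ∃ q : ℝ, q = C₁ / (1 + C₁) := ⟨_, rfl⟩
    have hq0 : 0 < q := by rw [hq]; exact div_pos hC₁ (by linarith)
    have hq1 : q < 1 := by rw [hq]; exact (div_lt_one (by linarith)).2 (by linarith)
    have hstep : ∀ n, S (n + 1) ≤ q * S n := by
      intro n
      rw [hrec n, hq, div_mul_eq_mul_div, le_div_iff₀ (by linarith)]
      have h1 : S (n + 1) ≤ C₁ * a (n + 1) := hC (n + 1)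
      nlinarith [hSnonneg (n + 1), ha (n + 1)]
    have hiter : ∀ m j, S (m + j) ≤ q ^ j * S m := by
      intro m j
      induction j with
      | zero => simp
      | succ j ih =>
        have h1 : S (m + (j + 1)) = S ((m + j) + 1) := by ring_nf
        calc S (m + (j + 1)) = S ((m + j) + 1) := h1
          _ ≤ q * S (m + j) := hstep _
          _ ≤ q * (q ^ j * S m) := by nlinarith
          _ = q ^ (j + 1) * S m := by ring
    refine ⟨1 + C₁, by linarith, q, hq0, hq1, ?_⟩
    intro m n hmn
    rcases eq_or_lt_of_le hmn with rfl | hlt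
    · simp only [Nat.sub_self, pow_zero, mul_one]
      nlinarith [ha m]
    · have h1 : a n ≤ S (n - 1) := by
        have h0 : a ((n - 1) + 1 + 0) ≤ S (n - 1) :=
          Summable.le_tsum (hsumtail (n - 1)) 0 (fun k _ => ha _)
        have hn1 : (n - 1) + 1 = n := by omega
        simpa [hn1] using h0
      have h2 : S (n - 1) ≤ q ^ (n - 1 - m) * S m := by
        have heq : m + (n - 1 - m) = n - 1 := by omega
        have := hiter m (n - 1 - m)
        rwa [heq] at this
      have h3 : S m ≤ C₁ * a m := hC m
      have hpow : q ^ (n - m) = q * q ^ (n - 1 - m) := by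
        have : n - m = (n - 1 - m) + 1 := by omega
        rw [this, pow_succ]; ring
      have hqC : (1 + C₁) * q = C₁ := by
        rw [hq]; field_simp
      have hpownn : 0 ≤ q ^ (n - 1 - m) := pow_nonneg hq0.le _
      calc a n ≤ S (n - 1) := h1
        _ ≤ q ^ (n - 1 - m) * S m := h2
        _ ≤ q ^ (n - 1 - m) * (C₁ * a m) := by nlinarith
        _ = (1 + C₁) * q ^ (n - m) * a m := by rw [hpow]; linear_combination (-(q ^ (n - 1 - m) * a m)) * hqC
  · rintro ⟨C₂, hC₂, q, hq0, hq1, h⟩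
    have hgeo : Summable (fun n : ℕ => C₂ * a 0 * q ^ n) :=
      (summable_geometric_of_lt_one hq0.le hq1).mul_left _
    have hsum : Summable a := by
      refine Summable.of_nonneg_of_le ha (fun n => ?_) hgeo
      have := h 0 n (Nat.zero_le n)
      simp only [Nat.sub_zero] at this
      nlinarith
    refine ⟨hsum, C₂ * q / (1 - q), div_pos (mul_pos hC₂ hq0) (by linarith), ?_⟩
    intro n
    have hterm : ∀ k : ℕ, a (n + 1 + k) ≤ (C₂ * a n * q) * q ^ k := by
      intro k
      have := h n (n + 1 + k) (by omega)
      have hsub : n + 1 + k - n = k + 1 := by omega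
      rw [hsub, pow_succ] at this
      nlinarith
    have hsumtail : Summable (fun k => a (n + 1 + k)) := by
      have := (summable_nat_add_iff (n + 1)).2 hsum
      simpa [add_comm] using this
    have hsumg : Summable (fun k : ℕ => (C₂ * a n * q) * q ^ k) :=
      (summable_geometric_of_lt_one hq0.le hq1).mul_left _
    calc (∑' k, a (n + 1 + k)) ≤ ∑' k : ℕ, (C₂ * a n * q) * q ^ k :=
          Summable.tsum_le_tsum hterm hsumtail hsumg
      _ = (C₂ * a n * q) * (1 - q)⁻¹ := by
          rw [tsum_mul_left, tsum_geometric_of_lt_one hq0.le hq1]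
      _ = C₂ * q / (1 - q) * a n := by
          field_simp
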